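/- Let γ > 0, let s be a probability density on ℝ with mean 0, variance 1 and ∫s^{1+γ} ∈ (0,∞), let q be a probability density on ℝ^m, let c₀ : ℝ^m → (0,1] be measurable, and consider the location-scale family p_θ(y|x) = (1/σ)s((y − f_β(x))/σ) for θ = (β,σ), σ > 0. Suppose the target density is p₀ = p_{θ₀} for some θ₀ = (β₀, σ₀). Then for every c > 0 and every θ = (β, σ), the conditional density-power score satisfies S_power(c₀p₀, c·p_θ; q) ≥ −(∫c₀(x)q(x)dx)^{1+γ}·σ₀^{−γ}·∫s(z)^{1+γ}dz, and equality holds at θ = θ₀ and c = ∫c₀(x)q(x)dx; that is, (c,θ) = (∫c₀ q dx, θ₀) is an optimal solution of minimizing S_power(c₀p₀, c·p_θ; q) over c > 0, θ ∈ Θ. -/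

import Mathlib

open MeasureTheory

lemma hetAux1 (γ : ℝ) (hγ : 0 < γ) (s : ℝ → ℝ) (hs0 : ∀ z, 0 ≤ s z)
    (hsint : Integrable (fun z => s z ^ (1 + γ))) (σ a : ℝ) (hσ : 0 < σ) :
    Integrable (fun y : ℝ => (σ⁻¹ * s ((y - a) / σ)) ^ (1 + γ)) ∧
    (∫ y : ℝ, (σ⁻¹ * s ((y - a) / σ)) ^ (1 + γ)) = σ ^ (-γ) * ∫ z : ℝ, s z ^ (1 + γ) := by
  have hσ' : σ ≠ 0 := hσ.ne'
  have key : ∀ y : ℝ, (σ⁻¹ * s ((y - a) / σ)) ^ (1 + γ)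
      = σ ^ (-(1 + γ)) * s ((y - a) / σ) ^ (1 + γ) := by
    intro y
    rw [Real.mul_rpow (inv_nonneg.mpr hσ.le) (hs0 _), Real.inv_rpow hσ.le,
      ← Real.rpow_neg hσ.le]
  have hi0 : Integrable (fun y : ℝ => s ((y - a) / σ) ^ (1 + γ)) := by
    have h1 : Integrable (fun x : ℝ => s (x / σ) ^ (1 + γ)) := hsint.comp_div hσ'
    exact h1.comp_sub_right a
  have hi : Integrable (fun y : ℝ => (σ⁻¹ * s ((y - a) / σ)) ^ (1 + γ)) := by
    simp_rw [key]; exact hi0.const_mul _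
  refine ⟨hi, ?_⟩
  have e1 : (∫ y : ℝ, (σ⁻¹ * s ((y - a) / σ)) ^ (1 + γ))
      = σ ^ (-(1 + γ)) * ∫ y : ℝ, s ((y - a) / σ) ^ (1 + γ) := by
    simp_rw [key]; exact integral_const_mul _ _
  have e2 : (∫ y : ℝ, s ((y - a) / σ) ^ (1 + γ)) = ∫ x : ℝ, s (x / σ) ^ (1 + γ) :=
    integral_sub_right_eq_self (fun x : ℝ => s (x / σ) ^ (1 + γ)) a
  have e3 : (∫ x : ℝ, s (x / σ) ^ (1 + γ)) = σ * ∫ z : ℝ, s z ^ (1 + γ) := by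
    rw [Measure.integral_comp_div (fun z : ℝ => s z ^ (1 + γ)) σ, abs_of_pos hσ, smul_eq_mul]
  rw [e1, e2, e3, ← mul_assoc]
  congr 1
  rw [show σ ^ (-(1 + γ)) * σ = σ ^ (-(1 + γ)) * σ ^ (1 : ℝ) by rw [Real.rpow_one],
    ← Real.rpow_add hσ]
  norm_num

/-- Hölder bound for the cross term. -/
lemma hetAux2 (γ : ℝ) (hγ : 0 < γ) (s : ℝ → ℝ) (hsm : Measurable s) (hs0 : ∀ z, 0 ≤ s z)
    (hsint : Integrable (fun z => s z ^ (1 + γ))) (σ τ a b : ℝ) (hσ : 0 < σ) (hτ : 0 < τ) :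
    (∫ y : ℝ, (τ⁻¹ * s ((y - b) / τ)) * (σ⁻¹ * s ((y - a) / σ)) ^ γ)
      ≤ (τ ^ (-γ) * ∫ z : ℝ, s z ^ (1 + γ)) ^ (1 / (1 + γ))
        * (σ ^ (-γ) * ∫ z : ℝ, s z ^ (1 + γ)) ^ (γ / (1 + γ)) := by
  have h1γ : (0 : ℝ) < 1 + γ := by linarith
  set f : ℝ → ℝ := fun y => τ⁻¹ * s ((y - b) / τ) with hf
  set g0 : ℝ → ℝ := fun y => σ⁻¹ * s ((y - a) / σ) with hg0
  have hfn : ∀ y, 0 ≤ f y := fun y => mul_nonneg (inv_nonneg.mpr hτ.le) (hs0 _)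
  have hgn : ∀ y, 0 ≤ g0 y := fun y => mul_nonneg (inv_nonneg.mpr hσ.le) (hs0 _)
  have hfm : Measurable f :=
    (hsm.comp ((measurable_id.sub_const b).div_const τ)).const_mul τ⁻¹
  have hgm : Measurable g0 :=
    (hsm.comp ((measurable_id.sub_const a).div_const σ)).const_mul σ⁻¹
  have hpq : Real.HolderConjugate (1 + γ) ((1 + γ) / γ) := by
    refine ⟨?_, by positivity, by positivity⟩
    rw [inv_div, inv_one, inv_eq_one_div, ← add_div, div_self h1γ.ne']
  -- MemLp facts
  have hq0 : ENNReal.ofReal (1 + γ) ≠ 0 := by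
    simp [ENNReal.ofReal_eq_zero, not_le, h1γ]
  have hqt : ENNReal.ofReal (1 + γ) ≠ ⊤ := ENNReal.ofReal_ne_top
  have hq0' : ENNReal.ofReal ((1 + γ) / γ) ≠ 0 := by
    simp only [ne_eq, ENNReal.ofReal_eq_zero, not_le]
    positivity
  have hqt' : ENNReal.ofReal ((1 + γ) / γ) ≠ ⊤ := ENNReal.ofReal_ne_top
  have hfint : Integrable (fun y : ℝ => f y ^ (1 + γ)) :=
    (hetAux1 γ hγ s hs0 hsint τ b hτ).1
  have hgint : Integrable (fun y : ℝ => g0 y ^ (1 + γ)) :=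
    (hetAux1 γ hγ s hs0 hsint σ a hσ).1
  have hmemf : MemLp f (ENNReal.ofReal (1 + γ)) volume := by
    rw [← memLp_norm_rpow_iff hfm.aestronglyMeasurable hq0 hqt,
      ENNReal.toReal_ofReal h1γ.le, ENNReal.div_self hq0 hqt, memLp_one_iff_integrable]
    refine hfint.congr ?_
    filter_upwards with y
    rw [Real.norm_of_nonneg (hfn y)]
  have hmemg : MemLp (fun y => g0 y ^ γ) (ENNReal.ofReal ((1 + γ) / γ)) volume := by
    rw [← memLp_norm_rpow_iff (hgm.pow measurable_const).aestronglyMeasurable hq0' hqt',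
      ENNReal.toReal_ofReal (by positivity), ENNReal.div_self hq0' hqt',
      memLp_one_iff_integrable]
    refine hgint.congr ?_
    filter_upwards with y
    rw [Real.norm_of_nonneg (Real.rpow_nonneg (hgn y) γ), ← Real.rpow_mul (hgn y)]
    congr 1
    field_simp
  have H := integral_mul_le_Lp_mul_Lq_of_nonneg hpq
    (Filter.Eventually.of_forall hfn) (Filter.Eventually.of_forall fun y => Real.rpow_nonneg (hgn y) γ)
    hmemf hmemg
  calc (∫ y : ℝ, f y * g0 y ^ γ)
      ≤ (∫ y : ℝ, f y ^ (1 + γ)) ^ (1 / (1 + γ))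
        * (∫ y : ℝ, (g0 y ^ γ) ^ ((1 + γ) / γ)) ^ (1 / ((1 + γ) / γ)) := H
    _ = (τ ^ (-γ) * ∫ z : ℝ, s z ^ (1 + γ)) ^ (1 / (1 + γ))
        * (σ ^ (-γ) * ∫ z : ℝ, s z ^ (1 + γ)) ^ (γ / (1 + γ)) := by
        rw [(hetAux1 γ hγ s hs0 hsint τ b hτ).2]
        congr 1
        rw [show (∫ y : ℝ, (g0 y ^ γ) ^ ((1 + γ) / γ)) = ∫ y : ℝ, g0 y ^ (1 + γ) from
          integral_congr_ae (Filter.Eventually.of_forall fun y => by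
            show (g0 y ^ γ) ^ ((1 + γ) / γ) = g0 y ^ (1 + γ)
            rw [← Real.rpow_mul (hgn y)]; congr 1; field_simp),
          (hetAux1 γ hγ s hs0 hsint σ a hσ).2, one_div_div]

/-- Under heterogeneous contamination with ratio function `c₀(x)`, for the
location-scale family `p_θ(y|x) = (1/σ)s((y − f_β(x))/σ)` with target `p₀ = p_{θ₀}`,
the conditional density-power score satisfies, for every `c > 0` and `θ = (β,σ)`,
`S_power(c₀p₀, c·p_θ; q) ≥ −(∫c₀ q)^{1+γ}·σ₀^{−γ}·∫s^{1+γ}`, with equality at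
`θ = θ₀`, `c = ∫ c₀(x)q(x)dx`. -/
theorem heterogeneous_location_scale_optimal_solution
    {m d : ℕ} (γ : ℝ) (hγ : 0 < γ)
    (s : ℝ → ℝ) (hsm : Measurable s) (hs0 : ∀ z, 0 ≤ s z)
    (hsi : Integrable s) (hs1 : (∫ z, s z) = 1)
    (hsmean : (∫ z : ℝ, z * s z) = 0) (hsvar : (∫ z : ℝ, z ^ 2 * s z) = 1)
    (hsint : Integrable (fun z => s z ^ (1 + γ)))
    (hspos : 0 < ∫ z, s z ^ (1 + γ))
    (q : (Fin m → ℝ) → ℝ)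
    (hqm : Measurable q) (hq0 : ∀ x, 0 ≤ q x)
    (hqi : Integrable q) (hq1 : (∫ x, q x) = 1)
    (c₀ : (Fin m → ℝ) → ℝ) (hc₀m : Measurable c₀)
    (hc₀ : ∀ x, c₀ x ∈ Set.Ioc (0 : ℝ) 1)
    (hc₀qint : Integrable (fun x => c₀ x * q x))
    (F : (Fin d → ℝ) → (Fin m → ℝ) → ℝ) (hFm : ∀ β, Measurable (F β))
    (β₀ : Fin d → ℝ) (σ₀ : ℝ) (hσ₀ : 0 < σ₀)
    (P : (Fin d → ℝ) → ℝ → ((Fin m → ℝ) × ℝ) → ℝ)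
    (hP : ∀ β σ z, P β σ z = σ⁻¹ * s ((z.2 - F β z.1) / σ))
    (hint1 : ∀ β σ, 0 < σ →
      Integrable (fun z : (Fin m → ℝ) × ℝ => q z.1 * P β σ z ^ (1 + γ)))
    (hint2 : ∀ β σ, 0 < σ →
      Integrable (fun z : (Fin m → ℝ) × ℝ =>
        c₀ z.1 * P β₀ σ₀ z * q z.1 * P β σ z ^ γ))
    (cE : ℝ) (hcE : cE = ∫ x, c₀ x * q x) :
    (∀ c : ℝ, 0 < c → ∀ β : Fin d → ℝ, ∀ σ : ℝ, 0 < σ →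
      -(cE ^ (1 + γ) * σ₀ ^ (-γ) * (∫ z : ℝ, s z ^ (1 + γ))) ≤
        γ * (∫ z, q z.1 * (c * P β σ z) ^ (1 + γ)) -
          (1 + γ) * (∫ z, c₀ z.1 * P β₀ σ₀ z * q z.1 * (c * P β σ z) ^ γ)) ∧
    (γ * (∫ z, q z.1 * (cE * P β₀ σ₀ z) ^ (1 + γ)) -
        (1 + γ) * (∫ z, c₀ z.1 * P β₀ σ₀ z * q z.1 * (cE * P β₀ σ₀ z) ^ γ) =
      -(cE ^ (1 + γ) * σ₀ ^ (-γ) * (∫ z : ℝ, s z ^ (1 + γ)))) := by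
  have h1γ : (0 : ℝ) < 1 + γ := by linarith
  set A : ℝ := ∫ z : ℝ, s z ^ (1 + γ) with hA
  have hAnn : 0 ≤ A := hspos.le
  have hcEnn : 0 ≤ cE := by
    rw [hcE]; exact integral_nonneg fun x => mul_nonneg (hc₀ x).1.le (hq0 x)
  have hPnn : ∀ β σ, 0 < σ → ∀ z, 0 ≤ P β σ z := by
    intro β σ hσ z
    rw [hP]
    exact mul_nonneg (inv_nonneg.mpr hσ.le) (hs0 _)
  -- general computation of the first integral
  have hT1 : ∀ (c : ℝ), 0 ≤ c → ∀ (β : Fin d → ℝ) (σ : ℝ), 0 < σ →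
      (∫ z : (Fin m → ℝ) × ℝ, q z.1 * (c * P β σ z) ^ (1 + γ))
        = c ^ (1 + γ) * (σ ^ (-γ) * A) := by
    intro c hc β σ hσ
    have step1 : (∫ z : (Fin m → ℝ) × ℝ, q z.1 * (c * P β σ z) ^ (1 + γ))
        = c ^ (1 + γ) * ∫ z : (Fin m → ℝ) × ℝ, q z.1 * P β σ z ^ (1 + γ) := by
      rw [← integral_const_mul]
      congr 1
      funext z
      rw [Real.mul_rpow hc (hPnn β σ hσ z)]
      ring
    have step2 : (∫ z : (Fin m → ℝ) × ℝ, q z.1 * P β σ z ^ (1 + γ))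
        = ∫ x, ∫ y, q x * P β σ (x, y) ^ (1 + γ) :=
      MeasureTheory.integral_prod _ (hint1 β σ hσ)
    have step3 : ∀ x, (∫ y, q x * P β σ (x, y) ^ (1 + γ)) = q x * (σ ^ (-γ) * A) := by
      intro x
      simp only [hP]
      rw [integral_const_mul, (hetAux1 γ hγ s hs0 hsint σ (F β x) hσ).2]
    have step4 : (∫ x, q x * (σ ^ (-γ) * A)) = σ ^ (-γ) * A := by
      rw [integral_mul_const, hq1, one_mul]
    rw [step1, step2]
    simp_rw [step3]
    rw [step4]
  constructor
  · -- inequality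
    intro c hc β σ hσ
    set B : ℝ := ∫ z : (Fin m → ℝ) × ℝ, c₀ z.1 * P β₀ σ₀ z * q z.1 * P β σ z ^ γ with hB
    set D : ℝ := (σ₀ ^ (-γ) * A) ^ (1 / (1 + γ)) * (σ ^ (-γ) * A) ^ (γ / (1 + γ)) with hD
    have hT2 : (∫ z : (Fin m → ℝ) × ℝ, c₀ z.1 * P β₀ σ₀ z * q z.1 * (c * P β σ z) ^ γ)
        = c ^ γ * B := by
      rw [hB, ← integral_const_mul]
      congr 1
      funext z
      rw [Real.mul_rpow hc.le (hPnn β σ hσ z)]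
      ring
    have hBle : B ≤ cE * D := by
      have fub : B = ∫ x, ∫ y, c₀ x * P β₀ σ₀ (x, y) * q x * P β σ (x, y) ^ γ :=
        MeasureTheory.integral_prod _ (hint2 β σ hσ)
      have inner_eq : ∀ x, (∫ y, c₀ x * P β₀ σ₀ (x, y) * q x * P β σ (x, y) ^ γ)
          = (c₀ x * q x) * ∫ y, P β₀ σ₀ (x, y) * P β σ (x, y) ^ γ := by
        intro x
        rw [← integral_const_mul]
        congr 1
        funext y
        ring
      have inner_le : ∀ x, (∫ y, P β₀ σ₀ (x, y) * P β σ (x, y) ^ γ) ≤ D := by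
        intro x
        simp only [hP]
        exact hetAux2 γ hγ s hsm hs0 hsint σ σ₀ (F β x) (F β₀ x) hσ hσ₀
      have hlhs_int : Integrable (fun x =>
          (c₀ x * q x) * ∫ y, P β₀ σ₀ (x, y) * P β σ (x, y) ^ γ) := by
        refine ((hint2 β σ hσ).integral_prod_left).congr ?_
        filter_upwards with x
        rw [inner_eq x]
      have hrhs_int : Integrable (fun x => (c₀ x * q x) * D) := hc₀qint.mul_const D
      have hmono : (∫ x, (c₀ x * q x) * ∫ y, P β₀ σ₀ (x, y) * P β σ (x, y) ^ γ)
          ≤ ∫ x, (c₀ x * q x) * D := by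
        refine integral_mono hlhs_int hrhs_int fun x => ?_
        exact mul_le_mul_of_nonneg_left (inner_le x)
          (mul_nonneg (hc₀ x).1.le (hq0 x))
      calc B = ∫ x, (c₀ x * q x) * ∫ y, P β₀ σ₀ (x, y) * P β σ (x, y) ^ γ := by
              rw [fub]; exact integral_congr_ae (Filter.Eventually.of_forall fun x => inner_eq x)
        _ ≤ ∫ x, (c₀ x * q x) * D := hmono
        _ = cE * D := by rw [integral_mul_const, ← hcE]
    -- Young's inequality part
    have hX : (0:ℝ) ≤ σ ^ (-γ) * A := mul_nonneg (Real.rpow_nonneg hσ.le _) hAnn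
    have hX0 : (0:ℝ) ≤ σ₀ ^ (-γ) * A := mul_nonneg (Real.rpow_nonneg hσ₀.le _) hAnn
    set u : ℝ := c * (σ ^ (-γ) * A) ^ (1 / (1 + γ)) with hu
    set v : ℝ := cE * (σ₀ ^ (-γ) * A) ^ (1 / (1 + γ)) with hv
    have hun : 0 ≤ u := mul_nonneg hc.le (Real.rpow_nonneg hX _)
    have hvn : 0 ≤ v := mul_nonneg hcEnn (Real.rpow_nonneg hX0 _)
    have hpq : Real.HolderConjugate (1 + γ) ((1 + γ) / γ) := by
      refine ⟨?_, by positivity, by positivity⟩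
      rw [inv_div, inv_one, inv_eq_one_div, ← add_div, div_self h1γ.ne']
    have young := Real.young_inequality_of_nonneg hvn (Real.rpow_nonneg hun γ) hpq
    have hu1 : u ^ (1 + γ) = c ^ (1 + γ) * (σ ^ (-γ) * A) := by
      rw [hu, Real.mul_rpow hc.le (Real.rpow_nonneg hX _), ← Real.rpow_mul hX,
        one_div_mul_cancel h1γ.ne', Real.rpow_one]
    have hv1 : v ^ (1 + γ) = cE ^ (1 + γ) * (σ₀ ^ (-γ) * A) := by
      rw [hv, Real.mul_rpow hcEnn (Real.rpow_nonneg hX0 _), ← Real.rpow_mul hX0,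
        one_div_mul_cancel h1γ.ne', Real.rpow_one]
    have hu2 : (u ^ γ) ^ ((1 + γ) / γ) = u ^ (1 + γ) := by
      rw [← Real.rpow_mul hun]
      congr 1
      field_simp
    have hvu : v * u ^ γ = c ^ γ * (cE * D) := by
      rw [hu, hv, Real.mul_rpow hc.le (Real.rpow_nonneg hX _), ← Real.rpow_mul hX, hD,
        show 1 / (1 + γ) * γ = γ / (1 + γ) by ring]
      ring
    rw [hvu, hv1, hu2, hu1] at young
    -- young : c ^ γ * (cE * D) ≤ (cE^(1+γ) * (σ₀^(-γ)*A)) / (1+γ)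
    --            + (c^(1+γ) * (σ^(-γ)*A)) / ((1+γ)/γ)
    have hyoung2 : (1 + γ) * (c ^ γ * (cE * D))
        ≤ cE ^ (1 + γ) * (σ₀ ^ (-γ) * A) + γ * (c ^ (1 + γ) * (σ ^ (-γ) * A)) := by
      have heq : cE ^ (1 + γ) * (σ₀ ^ (-γ) * A) / (1 + γ)
          + c ^ (1 + γ) * (σ ^ (-γ) * A) / ((1 + γ) / γ)
          = (cE ^ (1 + γ) * (σ₀ ^ (-γ) * A) + γ * (c ^ (1 + γ) * (σ ^ (-γ) * A))) / (1 + γ) := by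
        field_simp
      rw [heq] at young
      calc (1 + γ) * (c ^ γ * (cE * D))
          ≤ (1 + γ) * ((cE ^ (1 + γ) * (σ₀ ^ (-γ) * A)
              + γ * (c ^ (1 + γ) * (σ ^ (-γ) * A))) / (1 + γ)) := by
            exact mul_le_mul_of_nonneg_left young h1γ.le
        _ = cE ^ (1 + γ) * (σ₀ ^ (-γ) * A) + γ * (c ^ (1 + γ) * (σ ^ (-γ) * A)) := by
            field_simp
    have hstep : (1 + γ) * (c ^ γ * B) ≤ (1 + γ) * (c ^ γ * (cE * D)) := by
      have hcγ : 0 ≤ c ^ γ := Real.rpow_nonneg hc.le γ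
      have h := mul_le_mul_of_nonneg_left hBle hcγ
      have := mul_le_mul_of_nonneg_left h h1γ.le
      linarith
    rw [hT1 c hc.le β σ hσ, hT2]
    linarith [hyoung2, hstep]
  · -- equality
    have hT1e := hT1 cE hcEnn β₀ σ₀ hσ₀
    have hT2e : (∫ z : (Fin m → ℝ) × ℝ, c₀ z.1 * P β₀ σ₀ z * q z.1 * (cE * P β₀ σ₀ z) ^ γ)
        = cE ^ γ * (cE * (σ₀ ^ (-γ) * A)) := by
      have step1 : (∫ z : (Fin m → ℝ) × ℝ, c₀ z.1 * P β₀ σ₀ z * q z.1 * (cE * P β₀ σ₀ z) ^ γ)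
          = cE ^ γ * ∫ z : (Fin m → ℝ) × ℝ, c₀ z.1 * q z.1 * P β₀ σ₀ z ^ (1 + γ) := by
        rw [← integral_const_mul]
        congr 1
        funext z
        rw [Real.mul_rpow hcEnn (hPnn β₀ σ₀ hσ₀ z),
          Real.rpow_add' (hPnn β₀ σ₀ hσ₀ z) (by positivity : (1:ℝ) + γ ≠ 0), Real.rpow_one]
        ring
      have hint : Integrable (fun z : (Fin m → ℝ) × ℝ =>
          c₀ z.1 * q z.1 * P β₀ σ₀ z ^ (1 + γ)) := by
        refine (hint2 β₀ σ₀ hσ₀).congr ?_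
        filter_upwards with z
        rw [Real.rpow_add' (hPnn β₀ σ₀ hσ₀ z) (by positivity : (1:ℝ) + γ ≠ 0), Real.rpow_one]
        ring
      have step2 : (∫ z : (Fin m → ℝ) × ℝ, c₀ z.1 * q z.1 * P β₀ σ₀ z ^ (1 + γ))
          = ∫ x, ∫ y, c₀ x * q x * P β₀ σ₀ (x, y) ^ (1 + γ) :=
        MeasureTheory.integral_prod _ hint
      have step3 : ∀ x, (∫ y, c₀ x * q x * P β₀ σ₀ (x, y) ^ (1 + γ))
          = (c₀ x * q x) * (σ₀ ^ (-γ) * A) := by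
        intro x
        simp only [hP]
        rw [integral_const_mul, (hetAux1 γ hγ s hs0 hsint σ₀ (F β₀ x) hσ₀).2]
      have step4 : (∫ x, (c₀ x * q x) * (σ₀ ^ (-γ) * A)) = cE * (σ₀ ^ (-γ) * A) := by
        rw [integral_mul_const, ← hcE]
      rw [step1, step2]
      simp_rw [step3]
      rw [step4]
    rw [hT1e, hT2e]
    have hE : cE ^ γ * cE = cE ^ (1 + γ) := by
      rw [Real.rpow_add' hcEnn (by positivity : (1:ℝ) + γ ≠ 0), Real.rpow_one]
      ring
    linear_combination (-(1 + γ) * (σ₀ ^ (-γ) * A)) * hE
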